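/- For every n = 1, …, N, the full and leave-one-out minimizers satisfy ‖θ̂ − θ_{∖n}‖₂ ≤ (1/(N λ)) · |D_n^{(1)}| · ‖x_n‖₂. -/

import Mathlib

open Matrix BigOperators RealInnerProductSpace

private lemma convexOn_affine_comp (f : ℝ → ℝ) (hf : ConvexOn ℝ Set.univ f) (a b : ℝ) :
    ConvexOn ℝ Set.univ (fun t => f (a + t * b)) := by
  refine ⟨convex_univ, fun p _ q _ s r hs hr hsr => ?_⟩
  have h : a + (s • p + r • q) * b = s • (a + p * b) + r • (a + q * b) := by
    simp only [smul_eq_mul]; linear_combination (-a) * hsr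
  show f (a + (s • p + r • q) * b) ≤ s • f (a + p * b) + r • f (a + q * b)
  rw [h]
  exact hf.2 (Set.mem_univ _) (Set.mem_univ _) hs hr hsr

private lemma convexOn_finset_sum {ι : Type*} (s : Finset ι) (g : ι → ℝ → ℝ)
    (h : ∀ i ∈ s, ConvexOn ℝ Set.univ (g i)) :
    ConvexOn ℝ Set.univ (fun t => ∑ i ∈ s, g i t) := by
  classical
  induction s using Finset.induction_on with
  | empty => simpa using convexOn_const (0:ℝ) convex_univ
  | insert _ _ hni ih =>
    rename_i i s'
    simp only [Finset.sum_insert hni]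
    exact (h i (Finset.mem_insert_self i s')).add
      (ih fun j hj => h j (Finset.mem_insert_of_mem hj))

theorem stmt_4
    (N D : ℕ) (hN : 1 ≤ N) (hD : 1 ≤ D)
    (x : Fin N → Fin D → ℝ) (y : Fin N → ℝ)
    (lam : ℝ) (hlam : 0 < lam)
    (f : ℝ → ℝ → ℝ)
    (hconv : ∀ c : ℝ, ConvexOn ℝ Set.univ (fun z => f z c))
    (hsmooth : ∀ c : ℝ, ContDiff ℝ 1 (fun z => f z c))
    (F : (Fin D → ℝ) → ℝ)
    (hF : F = fun θ => (1 / N : ℝ) * ∑ n, f (x n ⬝ᵥ θ) (y n) + lam / 2 * (θ ⬝ᵥ θ))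
    (Floo : Fin N → (Fin D → ℝ) → ℝ)
    (hFloo : ∀ n, Floo n = fun θ =>
      (1 / N : ℝ) * ∑ m ∈ Finset.univ.erase n, f (x m ⬝ᵥ θ) (y m) + lam / 2 * (θ ⬝ᵥ θ))
    (θhat : Fin D → ℝ)
    (hθhat : ∀ θ, F θhat ≤ F θ)
    (hθhatU : ∀ θ, (∀ θ', F θ ≤ F θ') → θ = θhat)
    (θloo : Fin N → Fin D → ℝ)
    (hθloo : ∀ n θ, Floo n (θloo n) ≤ Floo n θ)
    (hθlooU : ∀ n θ, (∀ θ', Floo n θ ≤ Floo n θ') → θ = θloo n)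
    (D1 : Fin N → ℝ)
    (hD1 : ∀ n, D1 n = deriv (fun z => f z (y n)) (x n ⬝ᵥ θhat))
    :
    ∀ n : Fin N,
      Real.sqrt ((θhat - θloo n) ⬝ᵥ (θhat - θloo n)) ≤
        1 / (N * lam) * (|D1 n| * Real.sqrt (x n ⬝ᵥ x n)) := by
  intro n
  have hNpos : (0:ℝ) < N := by exact_mod_cast Nat.lt_of_lt_of_le Nat.zero_lt_one hN
  set Δ : Fin D → ℝ := θhat - θloo n with hΔ
  set a : Fin N → ℝ := fun m => x m ⬝ᵥ θloo n with ha
  set b : Fin N → ℝ := fun m => x m ⬝ᵥ Δ with hb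
  set c0 : ℝ := θloo n ⬝ᵥ θloo n with hc0
  set d : ℝ := θloo n ⬝ᵥ Δ with hd
  set e : ℝ := Δ ⬝ᵥ Δ with he
  have he0 : 0 ≤ e := Finset.sum_nonneg fun i _ => mul_self_nonneg _
  -- line parametrization facts
  have hline : ∀ (m : Fin N) (t : ℝ), x m ⬝ᵥ (θloo n + t • Δ) = a m + t * b m := by
    intro m t
    simp [dotProduct_add, dotProduct_smul, smul_eq_mul, ha, hb]
  have hquad : ∀ t : ℝ, (θloo n + t • Δ) ⬝ᵥ (θloo n + t • Δ) = c0 + 2 * t * d + t ^ 2 * e := by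
    intro t
    simp only [dotProduct_add, add_dotProduct, dotProduct_smul, smul_dotProduct, smul_eq_mul,
      dotProduct_comm Δ (θloo n)]
    rw [hc0, hd, he]; ring
  have hθhat_eq : θloo n + (1:ℝ) • Δ = θhat := by
    rw [hΔ]; simp
  -- scalar component derivative
  have hcomp : ∀ (cst av bv t : ℝ),
      HasDerivAt (fun t => f (av + t * bv) cst)
        (deriv (fun z => f z cst) (av + t * bv) * bv) t := by
    intro cst av bv t
    have hinner : HasDerivAt (fun t : ℝ => av + t * bv) bv t := by
      simpa using ((hasDerivAt_id t).mul_const bv).const_add av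
    exact ((((hsmooth cst).differentiable one_ne_zero) (av + t * bv)).hasDerivAt).comp t hinner
  -- g and its derivative
  set g : ℝ → ℝ := fun t => (1 / N : ℝ) * ∑ m ∈ Finset.univ.erase n, f (a m + t * b m) (y m)
    with hg
  set g' : ℝ → ℝ := fun t => (1 / N : ℝ) * ∑ m ∈ Finset.univ.erase n,
      deriv (fun z => f z (y m)) (a m + t * b m) * b m with hg'
  have hgderiv : ∀ t, HasDerivAt g (g' t) t := by
    intro t
    exact (HasDerivAt.fun_sum fun m _ => hcomp (y m) (a m) (b m) t).const_mul _
  have hgconv : ConvexOn ℝ Set.univ g := by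
    refine ConvexOn.smul (by positivity)
      (convexOn_finset_sum _ _ fun m _ => convexOn_affine_comp _ (hconv (y m)) (a m) (b m))
  -- quadratic derivative
  have hqderiv : ∀ t : ℝ, HasDerivAt (fun t : ℝ => lam / 2 * (c0 + 2 * t * d + t ^ 2 * e))
      (lam * d + lam * e * t) t := by
    intro t
    have h1 : HasDerivAt (fun t : ℝ => 2 * t * d) (2 * d) t := by
      simpa using (((hasDerivAt_id t).const_mul (2:ℝ)).mul_const d)
    have h2 : HasDerivAt (fun t : ℝ => t ^ 2 * e) (2 * t * e) t := by
      simpa using (hasDerivAt_pow 2 t).mul_const e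
    have := (((hasDerivAt_const t c0).fun_add h1).fun_add h2).const_mul (lam / 2)
    exact this.congr_deriv (by ring)
  -- functions along the line
  have hFline : ∀ t : ℝ, F (θloo n + t • Δ) =
      g t + (1 / N : ℝ) * f (a n + t * b n) (y n) + lam / 2 * (c0 + 2 * t * d + t ^ 2 * e) := by
    intro t
    rw [hF]
    simp only [hline, hquad]
    rw [hg]
    rw [← Finset.add_sum_erase _ _ (Finset.mem_univ n)]
    ring
  have hFlooline : ∀ t : ℝ, Floo n (θloo n + t • Δ) =
      g t + lam / 2 * (c0 + 2 * t * d + t ^ 2 * e) := by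
    intro t
    rw [hFloo]
    simp only [hline, hquad]
    rfl
  -- derivative of F-line at 1 is zero
  have hFlineDeriv : HasDerivAt (fun t : ℝ => F (θloo n + t • Δ))
      (g' 1 + (1 / N : ℝ) * (deriv (fun z => f z (y n)) (a n + 1 * b n) * b n)
        + (lam * d + lam * e * 1)) (1:ℝ) := by
    have : HasDerivAt (fun t : ℝ => g t + (1 / N : ℝ) * f (a n + t * b n) (y n)
        + lam / 2 * (c0 + 2 * t * d + t ^ 2 * e))
        (g' 1 + (1 / N : ℝ) * (deriv (fun z => f z (y n)) (a n + 1 * b n) * b n)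
          + (lam * d + lam * e * 1)) 1 :=
      ((hgderiv 1).add ((hcomp (y n) (a n) (b n) 1).const_mul _)).add (hqderiv 1)
    exact this.congr_of_eventuallyEq (Filter.Eventually.of_forall fun t => (hFline t))
  have hmin1 : IsLocalMin (fun t : ℝ => F (θloo n + t • Δ)) 1 := by
    apply Filter.Eventually.of_forall
    intro t
    show F (θloo n + (1:ℝ) • Δ) ≤ _
    rw [hθhat_eq]
    exact hθhat _
  have hstat1 := hmin1.hasDerivAt_eq_zero hFlineDeriv
  -- derivative of Floo-line at 0 is zero
  have hFloolineDeriv : HasDerivAt (fun t : ℝ => Floo n (θloo n + t • Δ))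
      (g' 0 + (lam * d + lam * e * 0)) (0:ℝ) := by
    have : HasDerivAt (fun t : ℝ => g t + lam / 2 * (c0 + 2 * t * d + t ^ 2 * e))
        (g' 0 + (lam * d + lam * e * 0)) 0 := (hgderiv 0).add (hqderiv 0)
    exact this.congr_of_eventuallyEq (Filter.Eventually.of_forall fun t => (hFlooline t))
  have hmin0 : IsLocalMin (fun t : ℝ => Floo n (θloo n + t • Δ)) 0 := by
    apply Filter.Eventually.of_forall
    intro t
    show Floo n (θloo n + (0:ℝ) • Δ) ≤ _
    have h0 : θloo n + (0:ℝ) • Δ = θloo n := by simp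
    rw [h0]
    exact hθloo n _
  have hstat0 := hmin0.hasDerivAt_eq_zero hFloolineDeriv
  -- monotonicity of deriv g
  have hmono : g' 0 ≤ g' 1 := by
    have h := hgconv.monotoneOn_deriv (fun t _ => (hgderiv t).differentiableAt)
      (Set.mem_univ (0:ℝ)) (Set.mem_univ (1:ℝ)) zero_le_one
    rwa [(hgderiv 0).deriv, (hgderiv 1).deriv] at h
  -- identify D1
  have hDfn : deriv (fun z => f z (y n)) (a n + 1 * b n) = D1 n := by
    rw [hD1 n]
    congr 1
    rw [one_mul, ha, hb, ← dotProduct_add, hΔ]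
    simp
  rw [hDfn] at hstat1
  -- key inequality : lam * e ≤ -(1/N) * (D1 n * b n)
  have hkey : lam * e ≤ (1 / N : ℝ) * (|D1 n| * |b n|) := by
    have h1 : lam * e ≤ -((1 / N : ℝ) * (D1 n * b n)) := by nlinarith [hmono, hstat1, hstat0]
    have h2 : -((1 / N : ℝ) * (D1 n * b n)) ≤ (1 / N : ℝ) * (|D1 n| * |b n|) := by
      have : |(1 / N : ℝ) * (D1 n * b n)| = (1 / N : ℝ) * (|D1 n| * |b n|) := by
        rw [abs_mul, abs_mul, abs_of_nonneg (by positivity : (0:ℝ) ≤ (1 / N : ℝ))]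
      linarith [neg_abs_le ((1 / N : ℝ) * (D1 n * b n))]
    linarith
  -- Cauchy-Schwarz
  have hCS : |b n| ≤ Real.sqrt (x n ⬝ᵥ x n) * Real.sqrt e := by
    have hsq : (b n) ^ 2 ≤ (x n ⬝ᵥ x n) * e := by
      have := Finset.sum_mul_sq_le_sq_mul_sq Finset.univ (x n) Δ
      have hxx : x n ⬝ᵥ x n = ∑ i, (x n i) ^ 2 := by
        simp [dotProduct, sq]
      have hee : e = ∑ i, (Δ i) ^ 2 := by
        simp [he, dotProduct, sq]
      rw [hxx, hee]
      simpa [hb, dotProduct] using this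
    calc |b n| = Real.sqrt ((b n) ^ 2) := (Real.sqrt_sq_eq_abs _).symm
      _ ≤ Real.sqrt ((x n ⬝ᵥ x n) * e) := Real.sqrt_le_sqrt hsq
      _ = Real.sqrt (x n ⬝ᵥ x n) * Real.sqrt e := Real.sqrt_mul (Finset.sum_nonneg fun i _ => mul_self_nonneg _) _
  set s := Real.sqrt e with hs
  set X := Real.sqrt (x n ⬝ᵥ x n) with hX
  have hs0 : 0 ≤ s := Real.sqrt_nonneg _
  have hX0 : 0 ≤ X := Real.sqrt_nonneg _
  have hes : e = s * s := (Real.mul_self_sqrt he0).symm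
  rcases eq_or_lt_of_le hs0 with hzero | hpos
  · rw [← hzero]
    positivity
  · -- lam * s * s ≤ (1/N) * (|D1 n| * (X * s))
    have hmain : lam * (s * s) ≤ (1 / N : ℝ) * (|D1 n| * (X * s)) := by
      calc lam * (s * s) = lam * e := by rw [hes]
        _ ≤ (1 / N : ℝ) * (|D1 n| * |b n|) := hkey
        _ ≤ (1 / N : ℝ) * (|D1 n| * (X * s)) := by
            apply mul_le_mul_of_nonneg_left _ (by positivity)
            exact mul_le_mul_of_nonneg_left hCS (abs_nonneg _)
    have hdiv : lam * s ≤ (1 / N : ℝ) * (|D1 n| * X) := by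
      apply le_of_mul_le_mul_right _ hpos
      calc lam * s * s = lam * (s * s) := by ring
        _ ≤ (1 / N : ℝ) * (|D1 n| * (X * s)) := hmain
        _ = (1 / N : ℝ) * (|D1 n| * X) * s := by ring
    have hNlam : (0:ℝ) < N * lam := by positivity
    rw [div_mul_eq_mul_div, one_mul, le_div_iff₀ hNlam]
    calc |D1 n| * X ≥ N * (lam * s) := by
          have := mul_le_mul_of_nonneg_left hdiv (le_of_lt hNpos)
          calc (N:ℝ) * (lam * s) ≤ N * ((1 / N : ℝ) * (|D1 n| * X)) := this
            _ = |D1 n| * X := by field_simp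
      _ = s * (N * lam) := by ring
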